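/- Let K be a complete category and G : K → Set a continuous functor. Then the left Kan extension Lan_Y G : PK → Set of G along the Yoneda embedding Y : K → PK (given on objects by (Lan_Y G)(X) = X * G, the colimit of G weighted by X) is continuous. -/

import Mathlib

open CategoryTheory CategoryTheory.Limits Opposite

universe w v v' u u'

/-- A functor `S : K ⥤ M` is (`w`-)small if it is the left Kan extension of its
restriction to some small full subcategory of `K`. -/
def IsSmallFunctor {K : Type u} [Category.{v} K] {M : Type u'} [Category.{v'} M]
    (S : K ⥤ M) : Prop :=
  ∃ P : K → Prop, Small.{w} (Subtype P) ∧
    S.IsLeftKanExtension (𝟙 (ObjectProperty.ι P ⋙ S))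

/-- Representable presheaves are small. -/
theorem isSmallFunctor_yoneda_obj {K : Type u} [Category.{v} K] (A : K) :
    IsSmallFunctor.{w} (yoneda.obj A) := by
  refine ⟨fun X => X = op A, ?_, ?_⟩
  · have : Subsingleton {X : Kᵒᵖ // X = op A} :=
      ⟨fun X Y => Subtype.ext (X.2.trans Y.2.symm)⟩
    infer_instance
  · set P : Kᵒᵖ → Prop := fun X => X = op A with hP
    set ι := ObjectProperty.ι P with hι
    constructor
    refine ⟨IsInitial.ofUniqueHom (fun E => StructuredArrow.homMk
      (yonedaEquiv.symm (E.hom.app ⟨op A, rfl⟩ (𝟙 A))) ?_) ?_⟩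
    · ext X f
      have hnat := NatTrans.naturality_apply E.hom
        (show (⟨op A, rfl⟩ : ObjectProperty.FullSubcategory P) ⟶ X from ObjectProperty.homMk f.op) (𝟙 A)
      simp [ι] at hnat ⊢
      exact hnat.symm
    · intro E m
      apply StructuredArrow.hom_ext
      ext Y g
      have hx := congr_arg (fun h => h.app (⟨op A, rfl⟩ : ObjectProperty.FullSubcategory P) (𝟙 A)) m.w
      have hnat := NatTrans.naturality_apply m.right (Quiver.Hom.op g : op A ⟶ Y) (𝟙 A)
      have h1 : m.right.app (op A) (𝟙 A) = E.hom.app ⟨op A, rfl⟩ (𝟙 A) := by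
        rw [← hx]; rfl
      have h2 : (yoneda.obj A).map (Quiver.Hom.op g) (𝟙 A) = g := by simp; rfl
      show m.right.app Y g = E.right.map (Quiver.Hom.op g) (E.hom.app ⟨op A, rfl⟩ (𝟙 A))
      rw [← h1, ← hnat]
      exact congrArg (m.right.app Y) h2.symm

/-- The category of small presheaves on `K`. -/
abbrev SmallPresheaf (K : Type u) [Category.{v} K] : Type (max u (v + 1)) :=
  ObjectProperty.FullSubcategory (fun F : Kᵒᵖ ⥤ Type v => IsSmallFunctor.{v} F)

/-- The Yoneda embedding of `K` into its category of small presheaves. -/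
def smallYoneda (K : Type u) [Category.{v} K] : K ⥤ SmallPresheaf K where
  obj A := ⟨yoneda.obj A, isSmallFunctor_yoneda_obj A⟩
  map f := ObjectProperty.homMk (yoneda.map f)

/-- `L` is a limit of `S : C ⥤ A` weighted by `φ : C ⥤ Type v`, i.e. morphisms `a ⟶ L`
correspond, naturally in `a`, to natural transformations `φ ⟶ A(a, S-)`. -/
def IsWeightedLimit {C : Type u} [Category.{v} C] {A : Type u'} [Category.{v'} A]
    (φ : C ⥤ Type v) (S : C ⥤ A) (L : A) : Prop :=
  ∃ e : ∀ a : A, (a ⟶ L) ≃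
      ((φ ⋙ uliftFunctor.{v'}) ⟶ (S ⋙ coyoneda.obj (op a) ⋙ uliftFunctor.{v})),
    ∀ (a a' : A) (f : a' ⟶ a) (g : a ⟶ L) (c : C) (x : φ.obj c),
      (e a' (f ≫ g)).app c ⟨x⟩ = ⟨f ≫ ((e a g).app c ⟨x⟩).down⟩

/-- `L` is a colimit of `T : Cᵒᵖ ⥤ A` weighted by `φ : C ⥤ Type v`, i.e. morphisms `L ⟶ a`
correspond, naturally in `a`, to natural transformations `φ ⟶ A(T-, a)`. -/
def IsWeightedColimit {C : Type u} [Category.{v} C] {A : Type u'} [Category.{v'} A]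
    (φ : C ⥤ Type v) (T : Cᵒᵖ ⥤ A) (L : A) : Prop :=
  ∃ e : ∀ a : A, (L ⟶ a) ≃
      ((φ ⋙ uliftFunctor.{v'}) ⟶ (T.rightOp ⋙ yoneda.obj a ⋙ uliftFunctor.{v})),
    ∀ (a a' : A) (f : a ⟶ a') (g : L ⟶ a) (c : C) (x : φ.obj c),
      (e a' (g ≫ f)).app c ⟨x⟩ = ⟨((e a g).app c ⟨x⟩).down ≫ f⟩

/-- A class of weights with small domains. -/
def WeightClass : Type (v + 1) :=
  ∀ C : Cat.{v, v}, (C ⥤ Type v) → Prop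

/-- A category is `Φ`-complete if it has all `φ`-weighted limits for `φ ∈ Φ`. -/
def PhiComplete (Φ : WeightClass.{v}) (A : Type u) [Category.{v'} A] : Prop :=
  ∀ (C : Cat.{v, v}) (φ : C ⥤ Type v), Φ C φ →
    ∀ S : C ⥤ A, ∃ L : A, IsWeightedLimit φ S L

/-- A category is `Φ`-cocomplete if it has all `φ`-weighted colimits for `φ ∈ Φ`. -/
def PhiCocomplete (Φ : WeightClass.{v}) (A : Type u) [Category.{v'} A] : Prop :=
  ∀ (C : Cat.{v, v}) (φ : C ⥤ Type v), Φ C φ →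
    ∀ T : Cᵒᵖ ⥤ A, ∃ L : A, IsWeightedColimit φ T L

/-- A functor is `Φ`-continuous if it preserves all `φ`-weighted limits for `φ ∈ Φ`. -/
def PhiContinuous (Φ : WeightClass.{v}) {A : Type u} [Category.{v'} A]
    {B : Type u'} [Category.{w} B] (F : A ⥤ B) : Prop :=
  ∀ (C : Cat.{v, v}) (φ : C ⥤ Type v), Φ C φ →
    ∀ (S : C ⥤ A) (L : A), IsWeightedLimit φ S L → IsWeightedLimit φ (S ⋙ F) (F.obj L)

/-- The closure of a collection `P` of objects of `A` under `Φ`-weighted colimits. -/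
inductive PhiClosure (Φ : WeightClass.{v}) {A : Type u} [Category.{v'} A]
    (P : A → Prop) : A → Prop
  | base {X : A} (hX : P X) : PhiClosure Φ P X
  | colim {C : Cat.{v, v}} (φ : C ⥤ Type v) (hφ : Φ C φ) (T : Cᵒᵖ ⥤ A)
      (hT : ∀ c : Cᵒᵖ, PhiClosure Φ P (T.obj c)) {L : A}
      (hL : IsWeightedColimit φ T L) : PhiClosure Φ P L

/-- The smallness condition on a class of weights: for every small `C`, the closure of the
representables in the presheaf category of `C` under `Φ`-weighted colimits is small. -/
def SmallnessCondition (Φ : WeightClass.{v}) : Prop :=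
  ∀ C : Cat.{v, v}, EssentiallySmall.{v} (ObjectProperty.FullSubcategory (PhiClosure Φ
    (fun F : Cᵒᵖ ⥤ Type v => ∃ c : C, Nonempty (F ≅ yoneda.obj c))))

/-- The soundness condition on a class of weights: for every small `Φ`-complete `D` and every
`Φ`-continuous `ψ : D ⥤ Type v`, the weighted-colimit functor `ψ * (-) : [Dᵒᵖ, Type v] ⥤ Type v`
(i.e. the small-colimit-preserving extension of `ψ` along the Yoneda embedding) is
`Φ`-continuous. -/
def SoundnessCondition (Φ : WeightClass.{v}) : Prop :=
  ∀ D : Cat.{v, v}, PhiComplete Φ D → ∀ ψ : D ⥤ Type v, PhiContinuous Φ ψ →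
    ∀ T : (Dᵒᵖ ⥤ Type v) ⥤ Type v, PreservesColimitsOfSize.{v, v} T →
      Nonempty ((yoneda : D ⥤ _) ⋙ T ≅ ψ) → PhiContinuous Φ T

/-- `φ` belongs to the saturation of `Φ` if it lies in the closure of the representables
under `Φ`-weighted colimits in the presheaf category over its domain. -/
def InSaturation (Φ : WeightClass.{v}) (C : Cat.{v, v}) (φ : C ⥤ Type v) : Prop :=
  PhiClosure Φ (fun F : C ⥤ Type v => ∃ c : Cᵒᵖ, Nonempty (F ≅ coyoneda.obj c)) φ

/-- A category `J` is `α`-filtered when every diagram with fewer than `α` arrows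
admits a cocone. -/
def IsCardinalFiltered (J : Type u) [Category.{v'} J] (α : Cardinal.{v}) : Prop :=
  ∀ D : Cat.{v, v}, Cardinal.mk (Arrow D) < α → ∀ F : D ⥤ J, Nonempty (Cocone F)

/-- An object `X` is `α`-presentable when its hom-functor preserves `α`-filtered colimits. -/
def IsPresentableObj {K : Type u} [Category.{v} K] (α : Cardinal.{v}) (X : K) : Prop :=
  ∀ J : Cat.{v, v}, IsCardinalFiltered J α →
    PreservesColimitsOfShape J (coyoneda.obj (op X))

/-- `K` is locally `α`-presentable: it is cocomplete and has a small full subcategory of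
`α`-presentable objects such that every object is an `α`-filtered colimit of objects
from it. -/
def IsLocallyPresentableAt (K : Type u) [Category.{v} K] (α : Cardinal.{v}) : Prop :=
  HasColimitsOfSize.{v, v} K ∧ α.IsRegular ∧
    ∃ P : K → Prop, Small.{v} (Subtype P) ∧ (∀ X, P X → IsPresentableObj α X) ∧
      ∀ X : K, ∃ J : Cat.{v, v}, IsCardinalFiltered J α ∧
        ∃ (F : J ⥤ K) (c : Cocone F),
          (∀ j, P (F.obj j)) ∧ c.pt = X ∧ Nonempty (IsColimit c)

/-- `K` is locally presentable. -/
def IsLocallyPresentable (K : Type u) [Category.{v} K] : Prop :=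
  ∃ α : Cardinal.{v}, IsLocallyPresentableAt K α

/-- `PF : PK ⥤ PL` is the (essentially unique) functor sending a small presheaf `X` to the
left Kan extension of `X` along `Fᵒᵖ`. -/
def IsPshExtensionOf {K : Type u} {L : Type u'} [Category.{v} K] [Category.{v} L]
    (F : K ⥤ L) (PF : SmallPresheaf K ⥤ SmallPresheaf L) : Prop :=
  ∃ ε : ObjectProperty.ι (fun X : Kᵒᵖ ⥤ Type v => IsSmallFunctor.{v} X) ⟶
      PF ⋙ ObjectProperty.ι (fun X : Lᵒᵖ ⥤ Type v => IsSmallFunctor.{v} X) ⋙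
        (Functor.whiskeringLeft Kᵒᵖ Lᵒᵖ (Type v)).obj F.op,
    ∀ X : SmallPresheaf K, Functor.IsLeftKanExtension ((PF.obj X).obj) (ε.app X)

open MonoidalCategory in
/-- `D` is the Day convolution `∫^{A,B} K(-, A ⊗ B) × F A × G B` of the presheaves
`F` and `G`: it carries a universal wedge. -/
def IsDayConvolution {K : Type u} [Category.{v} K] [MonoidalCategory K]
    (F G D : Kᵒᵖ ⥤ Type v) : Prop :=
  ∃ u : ∀ A B : K, F.obj (op A) → G.obj (op B) → D.obj (op (A ⊗ B)),
    (∀ (A A' B B' : K) (f : A' ⟶ A) (g : B' ⟶ B) (x : F.obj (op A)) (y : G.obj (op B)),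
      u A' B' (F.map f.op x) (G.map g.op y)
        = D.map (MonoidalCategory.tensorHom f g).op (u A B x y)) ∧
    ∀ (H : Kᵒᵖ ⥤ Type v)
      (p : ∀ A B : K, F.obj (op A) → G.obj (op B) → H.obj (op (A ⊗ B))),
      (∀ (A A' B B' : K) (f : A' ⟶ A) (g : B' ⟶ B) (x : F.obj (op A)) (y : G.obj (op B)),
        p A' B' (F.map f.op x) (G.map g.op y)
          = H.map (MonoidalCategory.tensorHom f g).op (p A B x y)) →
      ∃! τ : D ⟶ H, ∀ (A B : K) (x : F.obj (op A)) (y : G.obj (op B)),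
        τ.app (op (A ⊗ B)) (u A B x y) = p A B x y

/-- The restricted Yoneda embedding of `M` into presheaves on the full subcategory of
`β`-presentable objects. -/
def restrictedYoneda (M : Type u) [Category.{v} M] (β : Cardinal.{v}) :
    M ⥤ ((ObjectProperty.FullSubcategory (IsPresentableObj β : M → Prop))ᵒᵖ ⥤ Type v) :=
  yoneda ⋙ (Functor.whiskeringLeft _ _ _).obj (ObjectProperty.ι _).op

universe w2 w3

namespace St14

open CategoryTheory.CategoryOfElements

variable {K : Type u} [Category.{v} K] (G : K ⥤ Type v)

/-- Part 1: cones exist in the category of elements of a continuous functor. -/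
lemma exists_cone_elements {J : Type w2} [Category.{w3} J] (D : J ⥤ G.Elements)
    [HasLimit (D ⋙ π G)] [PreservesLimit (D ⋙ π G) G] :
    Nonempty (Cone D) := by
  have hc : IsLimit (G.mapCone (limit.cone (D ⋙ π G))) :=
    isLimitOfPreserves G (limit.isLimit _)
  let σ : ((D ⋙ π G) ⋙ G).sections :=
    ⟨fun j => (D.obj j).2, fun {j j'} f => (D.map f).2⟩
  let s : G.obj (limit (D ⋙ π G)) := (Types.isLimitEquivSections hc).symm σ
  have hs : ∀ j, G.map (limit.π (D ⋙ π G) j) s = (D.obj j).2 := fun j =>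
    Types.isLimitEquivSections_symm_apply hc σ j
  exact ⟨{ pt := ⟨limit (D ⋙ π G), s⟩
           π := { app := fun j => ⟨limit.π (D ⋙ π G) j, hs j⟩
                  naturality := fun j j' f => by
                    apply CategoryOfElements.ext
                    exact (Category.id_comp _).trans (limit.w (D ⋙ π G) f).symm } }⟩


lemma pull_comp {W : Kᵒᵖ ⥤ Type v} {x y z : G.Elements} (f : x ⟶ y) (g : y ⟶ z)
    (w : W.obj (op z.1)) :
    W.map (f ≫ g).val.op w = W.map f.val.op (W.map g.val.op w) := by
  rw [comp_val, op_comp]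
  exact FunctorToTypes.map_comp_apply W g.val.op f.val.op w

lemma pull_id {W : Kᵒᵖ ⥤ Type v} (x : G.Elements) (w : W.obj (op x.1)) :
    W.map (𝟙 x : x ⟶ x).val.op w = w := by
  rw [id_val, op_id]
  exact types_congr_hom (W.map_id _) w






def Raw (W : Kᵒᵖ ⥤ Type v) : Type max u v := Σ e : G.Elements, W.obj (op e.1)

def Rel (W : Kᵒᵖ ⥤ Type v) : Raw G W → Raw G W → Prop := fun a b =>
  ∃ f : a.1 ⟶ b.1, W.map f.val.op b.2 = a.2

def Cnd (W : Kᵒᵖ ⥤ Type v) : Type max u v := Quot (Rel G W)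

def cndMap {W W' : Kᵒᵖ ⥤ Type v} (τ : W ⟶ W') : Cnd G W → Cnd G W' :=
  Quot.map (fun a => ⟨a.1, τ.app _ a.2⟩) (by
    rintro a b ⟨f, hf⟩
    refine ⟨f, ?_⟩
    dsimp
    rw [← hf]
    exact (types_congr_hom (τ.naturality f.val.op) b.2).symm)

@[simp] lemma cndMap_mk {W W' : Kᵒᵖ ⥤ Type v} (τ : W ⟶ W') (a : Raw G W) :
    cndMap G τ (Quot.mk _ a) = Quot.mk _ (⟨a.1, τ.app _ a.2⟩ : Raw G W') := rfl

lemma cndMap_id (W : Kᵒᵖ ⥤ Type v) : cndMap G (𝟙 W) = id := by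
  funext t
  induction t using Quot.ind with
  | _ a => rfl

lemma cndMap_comp {W W' W'' : Kᵒᵖ ⥤ Type v} (τ : W ⟶ W') (τ' : W' ⟶ W'') :
    cndMap G (τ ≫ τ') = cndMap G τ' ∘ cndMap G τ := by
  funext t
  induction t using Quot.ind with
  | _ a => rfl

/-- The subfunctor of `W` of elements factoring through the subcategory `P`. -/
@[simps]
def subFun (W : Kᵒᵖ ⥤ Type v) (P : Kᵒᵖ → Prop) : Kᵒᵖ ⥤ Type v where
  obj c := {x : W.obj c // ∃ (p : ObjectProperty.FullSubcategory P) (g : p.obj ⟶ c)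
    (xp : W.obj p.obj), W.map g xp = x}
  map f := TypeCat.ofHom fun x => ⟨W.map f x.1, by
    obtain ⟨p, g, xp, hxp⟩ := x.2
    exact ⟨p, g ≫ f, xp, by rw [← hxp]; exact FunctorToTypes.map_comp_apply W g f xp⟩⟩
  map_id c := by ext x; exact types_congr_hom (W.map_id c) x.1
  map_comp f g := by ext x; exact FunctorToTypes.map_comp_apply W f g x.1

lemma exists_factor (W : Kᵒᵖ ⥤ Type v) (P : Kᵒᵖ → Prop)
    [hW : W.IsLeftKanExtension (𝟙 (ObjectProperty.ι P ⋙ W))] (c : Kᵒᵖ) (x : W.obj c) :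
    ∃ (p : ObjectProperty.FullSubcategory P) (g : p.obj ⟶ c) (xp : W.obj p.obj), W.map g xp = x := by
  set ι := ObjectProperty.ι P with hι
  let ν : subFun W P ⟶ W := { app := fun c => TypeCat.ofHom fun x => x.1 }
  let β : (ι ⋙ W) ⟶ ι ⋙ subFun W P :=
    { app := fun p₀ => TypeCat.ofHom fun x => ⟨x, p₀, 𝟙 p₀.obj, x, types_congr_hom (W.map_id _) x⟩
      naturality := fun p₀ p₁ f => by
        ext x
        apply Subtype.ext
        rfl }
  let τ : W ⟶ subFun W P := W.descOfIsLeftKanExtension (𝟙 (ι ⋙ W)) (subFun W P) β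
  have hfac : ∀ p₀ : ObjectProperty.FullSubcategory P, τ.app (ι.obj p₀) = β.app p₀ := by
    intro p₀
    have := W.descOfIsLeftKanExtension_fac_app (𝟙 (ι ⋙ W)) (subFun W P) β p₀
    simpa using this
  have hτν : τ ≫ ν = 𝟙 W := by
    apply W.hom_ext_of_isLeftKanExtension (𝟙 (ι ⋙ W))
    ext p₀ y
    simp only [NatTrans.comp_app, Functor.whiskerLeft_app, NatTrans.id_app, types_id_apply]
    show ν.app _ (τ.app (ι.obj p₀) _) = _
    rw [hfac p₀]
    rfl
  have hx : (τ.app c x).1 = x := types_congr_hom (congr_app hτν c) x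
  obtain ⟨p, g, xp, hxp⟩ := (τ.app c x).2
  exact ⟨p, g, xp, by rw [hxp, hx]⟩

lemma small_cnd (W : Kᵒᵖ ⥤ Type v) (hW : IsSmallFunctor.{v} W) : Small.{v} (Cnd G W) := by
  obtain ⟨P, hP, hlan⟩ := hW
  haveI := hlan
  haveI : Small.{v} (Subtype P) := hP
  let A := Σ p : Subtype P, W.obj p.1 × G.obj p.1.unop
  let φ : A → Cnd G W := fun a =>
    Quot.mk _ ⟨⟨a.1.1.unop, a.2.2⟩, (a.2.1 : W.obj (op a.1.1.unop))⟩
  have hsurj : Function.Surjective φ := by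
    intro t
    induction t using Quot.ind with
    | _ a =>
      obtain ⟨⟨k, s⟩, x⟩ := a
      obtain ⟨p, g, xp, hxp⟩ := exists_factor W P (op k) x
      refine ⟨⟨⟨p.obj, p.property⟩, xp, G.map g.unop s⟩, ?_⟩
      refine (Quot.sound ?_).symm
      refine ⟨⟨g.unop, rfl⟩, ?_⟩
      show W.map (g.unop).op xp = x
      rw [Quiver.Hom.op_unop]
      exact hxp
  exact small_of_surjective hsurj

instance smallCndInst (X : SmallPresheaf K) : Small.{v} (Cnd G X.obj) :=
  small_cnd G X.obj X.2

/-- Packaging of the shrinking equivalence, with universes pinned. -/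
noncomputable def pack (X : SmallPresheaf K) : Cnd G X.obj ≃ Shrink.{v} (Cnd G X.obj) :=
  equivShrink _

/-- The weighted-colimit functor, defined concretely. -/
noncomputable def T0 : SmallPresheaf K ⥤ Type v where
  obj X := Shrink.{v} (Cnd G X.obj)
  map {X Y} τ := TypeCat.ofHom fun t => pack G Y (cndMap G τ.hom ((pack G X).symm t))
  map_id X := by
    refine ConcreteCategory.hom_ext _ _ fun t => ?_
    conv_rhs => rw [show (𝟙 ((fun X => Shrink.{v} (Cnd G X.obj)) X) : _) t = t from rfl,
      ← Equiv.apply_symm_apply (pack G X) t]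
    show pack G X (cndMap G _ ((pack G X).symm t)) = pack G X ((pack G X).symm t)
    refine congrArg _ ?_
    induction ((pack G X).symm t) using Quot.ind with
    | _ a => rfl
  map_comp {X Y Z} f g := by
    refine ConcreteCategory.hom_ext _ _ fun t => ?_
    show pack G Z (cndMap G (f ≫ g).hom ((pack G X).symm t)) =
      pack G Z (cndMap G g.hom ((pack G Y).symm (pack G Y (cndMap G f.hom ((pack G X).symm t)))))
    rw [Equiv.symm_apply_apply]
    refine congrArg _ ?_
    induction ((pack G X).symm t) using Quot.ind with
    | _ a => rfl

/-- Class of a raw element in `T0`. -/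
noncomputable def mkT0 (X : SmallPresheaf K) (a : Raw G X.obj) : (T0 G).obj X :=
  pack G X (Quot.mk _ a)

lemma T0_map_mk {X Y : SmallPresheaf K} (τ : X ⟶ Y) (a : Raw G X.obj) :
    (T0 G).map τ (mkT0 G X a) = mkT0 G Y ⟨a.1, τ.hom.app _ a.2⟩ := by
  show pack G Y (cndMap G τ.hom ((pack G X).symm (pack G X (Quot.mk _ a)))) = _
  erw [Equiv.symm_apply_apply]
  rfl

lemma mkT0_eq (X : SmallPresheaf K) (a b : Raw G X.obj) (h : Quot.mk (Rel G X.obj) a = Quot.mk (Rel G X.obj) b) :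
    mkT0 G X a = mkT0 G X b := by
  show pack G X (Quot.mk _ a) = pack G X (Quot.mk _ b)
  exact congrArg _ h

/-- The unit of the left Kan extension. -/
noncomputable def α0 : G ⟶ smallYoneda K ⋙ T0 G where
  app k := TypeCat.ofHom fun s => mkT0 G ((smallYoneda K).obj k) ⟨⟨k, s⟩, 𝟙 k⟩
  naturality k k' f := by
    refine ConcreteCategory.hom_ext _ _ fun s => ?_
    show mkT0 G ((smallYoneda K).obj k') ⟨⟨k', G.map f s⟩, 𝟙 k'⟩ =
      (T0 G).map ((smallYoneda K).map f) (mkT0 G ((smallYoneda K).obj k) ⟨⟨k, s⟩, 𝟙 k⟩)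
    erw [T0_map_mk]
    refine (mkT0_eq G _ _ _ ?_).symm
    refine Quot.sound ⟨⟨f, rfl⟩, ?_⟩
    show (yoneda.obj k').map f.op (𝟙 k') = (yoneda.map f).app (op k) (𝟙 k)
    simp

/-- The morphism `smallYoneda.obj a.1.1 ⟶ X` attached to a raw element. -/
def rawHom (X : SmallPresheaf K) (a : Raw G X.obj) : (smallYoneda K).obj a.1.1 ⟶ X :=
  ObjectProperty.homMk (yonedaEquiv.symm a.2 : yoneda.obj a.1.1 ⟶ X.obj)

noncomputable def dscFun (S : SmallPresheaf K ⥤ Type v) (β : G ⟶ smallYoneda K ⋙ S)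
    (X : SmallPresheaf K) : Cnd G X.obj → S.obj X :=
  Quot.lift (fun a => S.map (rawHom G X a) (β.app a.1.1 a.1.2)) (by
    rintro a b ⟨f, hf⟩
    dsimp only
    have h1 : rawHom G X a = (smallYoneda K).map f.val ≫ rawHom G X b := by
      apply ObjectProperty.hom_ext
      show (yonedaEquiv.symm a.2 : yoneda.obj a.1.1 ⟶ X.obj) =
        yoneda.map f.val ≫ yonedaEquiv.symm b.2
      rw [yonedaEquiv_symm_naturality_left, hf]
    rw [h1, FunctorToTypes.map_comp_apply]
    refine congrArg _ ?_
    have h2 := types_congr_hom (β.naturality f.val) a.1.2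
    dsimp only [Functor.comp_obj, Functor.comp_map, types_comp_apply] at h2
    rw [← h2]
    refine congrArg _ ?_
    exact f.2)

lemma dscFun_mk (S : SmallPresheaf K ⥤ Type v) (β : G ⟶ smallYoneda K ⋙ S)
    (X : SmallPresheaf K) (a : Raw G X.obj) :
    dscFun G S β X (Quot.mk _ a) = S.map (rawHom G X a) (β.app a.1.1 a.1.2) := rfl

noncomputable def dsc (S : SmallPresheaf K ⥤ Type v) (β : G ⟶ smallYoneda K ⋙ S) :
    T0 G ⟶ S where
  app X := TypeCat.ofHom fun t => dscFun G S β X ((pack G X).symm t)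
  naturality X Y τ := by
    refine ConcreteCategory.hom_ext _ _ fun t => ?_
    obtain ⟨a, ha⟩ := Quot.exists_rep ((pack G X).symm t)
    have ht : t = mkT0 G X a := by erw [mkT0, ha, Equiv.apply_symm_apply]
    subst ht
    show dscFun G S β Y ((pack G Y).symm ((T0 G).map τ (mkT0 G X a))) =
      S.map τ (dscFun G S β X ((pack G X).symm (mkT0 G X a)))
    rw [T0_map_mk]
    show dscFun G S β Y ((pack G Y).symm (pack G Y (Quot.mk _ _))) =
      S.map τ (dscFun G S β X ((pack G X).symm (pack G X (Quot.mk _ a))))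
    erw [Equiv.symm_apply_apply, Equiv.symm_apply_apply, dscFun_mk, dscFun_mk]
    show S.map (rawHom G Y ⟨a.1, τ.hom.app _ a.2⟩) (β.app a.1.1 a.1.2) =
      S.map τ (S.map (rawHom G X a) (β.app a.1.1 a.1.2))
    rw [← FunctorToTypes.map_comp_apply]
    refine types_congr_hom (congrArg _ ?_) _
    apply ObjectProperty.hom_ext
    show (yonedaEquiv.symm (τ.hom.app _ a.2) : yoneda.obj a.1.1 ⟶ Y.obj) =
      (yonedaEquiv.symm a.2 ≫ τ.hom : yoneda.obj a.1.1 ⟶ Y.obj)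
    rw [yonedaEquiv_symm_naturality_right]

lemma dsc_fac (S : SmallPresheaf K ⥤ Type v) (β : G ⟶ smallYoneda K ⋙ S) :
    α0 G ≫ Functor.whiskerLeft (smallYoneda K) (dsc G S β) = β := by
  ext k s
  show dscFun G S β _ ((pack G _).symm (mkT0 G ((smallYoneda K).obj k) ⟨⟨k, s⟩, 𝟙 k⟩)) = β.app k s
  show dscFun G S β _ ((pack G _).symm (pack G _ (Quot.mk _ _))) = β.app k s
  erw [Equiv.symm_apply_apply, dscFun_mk]
  show S.map (rawHom G ((smallYoneda K).obj k) ⟨⟨k, s⟩, 𝟙 k⟩) (β.app k s) = β.app k s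
  have h1 : rawHom G ((smallYoneda K).obj k) ⟨⟨k, s⟩, 𝟙 k⟩ = 𝟙 ((smallYoneda K).obj k) := by
    apply ObjectProperty.hom_ext
    show (yonedaEquiv.symm (𝟙 k) : yoneda.obj k ⟶ yoneda.obj k) = 𝟙 (yoneda.obj k)
    exact yonedaEquiv.injective
      (by rw [Equiv.apply_symm_apply, ← yoneda.map_id, yonedaEquiv_yoneda_map])
  rw [h1, S.map_id]
  rfl

lemma mk_eq_T0_map (X : SmallPresheaf K) (a : Raw G X.obj) :
    mkT0 G X a = (T0 G).map (rawHom G X a) ((α0 G).app a.1.1 a.1.2) := by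
  show _ = (T0 G).map (rawHom G X a) (mkT0 G ((smallYoneda K).obj a.1.1) ⟨⟨a.1.1, a.1.2⟩, 𝟙 a.1.1⟩)
  erw [T0_map_mk]
  refine (mkT0_eq G _ _ _ ?_).symm
  refine congrArg _ ?_
  show (⟨⟨a.1.1, a.1.2⟩, (rawHom G X a).hom.app (op a.1.1) (𝟙 a.1.1)⟩ : Raw G X.obj) = a
  have : (rawHom G X a).hom.app (op a.1.1) (𝟙 a.1.1) = a.2 := by
    show (yonedaEquiv.symm a.2).app (op a.1.1) (𝟙 a.1.1) = a.2
    erw [yonedaEquiv_symm_app_apply]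
    exact types_congr_hom (X.obj.map_id _) a.2
  rw [this]
  rfl

theorem T0_isLKE : (T0 G).IsLeftKanExtension (α0 G) := by
  constructor
  refine ⟨IsInitial.ofUniqueHom
    (fun E => StructuredArrow.homMk (dsc G E.right E.hom) (dsc_fac G E.right E.hom)) ?_⟩
  intro E m
  apply StructuredArrow.hom_ext
  apply NatTrans.ext
  funext X
  refine ConcreteCategory.hom_ext _ _ fun t => ?_
  obtain ⟨a, ha⟩ := Quot.exists_rep ((pack G X).symm t)
  have ht : t = mkT0 G X a := by erw [mkT0, ha, Equiv.apply_symm_apply]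
  subst ht
  show m.right.app X (mkT0 G X a) = (dsc G E.right E.hom).app X (mkT0 G X a)
  have hw := types_congr_hom (NatTrans.congr_app m.w a.1.1) a.1.2
  rw [mk_eq_T0_map]
  have hnat' : m.right.app X ((T0 G).map (rawHom G X a) ((α0 G).app a.1.1 a.1.2)) =
      E.right.map (rawHom G X a)
        (m.right.app ((smallYoneda K).obj a.1.1) ((α0 G).app a.1.1 a.1.2)) := by
    have hnat := types_congr_hom (m.right.naturality (rawHom G X a)) ((α0 G).app a.1.1 a.1.2)
    dsimp only [Functor.comp_obj, Functor.comp_map, types_comp_apply] at hnat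
    exact hnat
  rw [hnat']
  show E.right.map (rawHom G X a) (m.right.app _ ((α0 G).app a.1.1 a.1.2)) =
    (dsc G E.right E.hom).app X ((T0 G).map (rawHom G X a) ((α0 G).app a.1.1 a.1.2))
  have hd := types_congr_hom ((dsc G E.right E.hom).naturality (rawHom G X a)) ((α0 G).app a.1.1 a.1.2)
  dsimp only [types_comp_apply] at hd
  rw [hd]
  refine congrArg _ ?_
  have hfac := types_congr_hom (NatTrans.congr_app (dsc_fac G E.right E.hom) a.1.1) a.1.2
  have hm : m.right.app ((smallYoneda K).obj a.1.1) ((α0 G).app a.1.1 a.1.2) =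
      E.hom.app a.1.1 a.1.2 := by
    have h := hw
    simp only [NatTrans.comp_app,
      Functor.LeftExtension.mk_hom, Functor.whiskeringLeft_obj_obj, Functor.whiskeringLeft_obj_map,
      Functor.whiskerLeft_app, NatTrans.id_app, types_id_apply, types_comp_apply,
      Functor.const_obj_obj, Functor.LeftExtension.mk_right] at h
    exact hw
  rw [hm]
  exact hfac.symm

section Filtered

variable [HasLimitsOfSize.{v, v} K] [PreservesLimitsOfSize.{v, v} G]

lemma exists_pair (e₁ e₂ : G.Elements) :
    ∃ (n : G.Elements) (_ : n ⟶ e₁) (_ : n ⟶ e₂), True := by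
  have : HasLimitsOfSize.{0, 0} K := hasLimitsOfSizeShrink.{0, 0, v, v} K
  have : PreservesLimitsOfSize.{0, 0} G := preservesLimitsOfSize_shrink.{0, v, 0, v} G
  obtain ⟨c⟩ := exists_cone_elements G (pair e₁ e₂)
  exact ⟨c.pt, c.π.app ⟨WalkingPair.left⟩, c.π.app ⟨WalkingPair.right⟩, trivial⟩

lemma exists_equalize {e e' : G.Elements} (f g : e ⟶ e') :
    ∃ (n : G.Elements) (h : n ⟶ e), h ≫ f = h ≫ g := by
  have : HasLimitsOfSize.{0, 0} K := hasLimitsOfSizeShrink.{0, 0, v, v} K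
  have : PreservesLimitsOfSize.{0, 0} G := preservesLimitsOfSize_shrink.{0, v, 0, v} G
  obtain ⟨c⟩ := exists_cone_elements G (parallelPair f g)
  refine ⟨c.pt, c.π.app WalkingParallelPair.zero, ?_⟩
  have h₁ := c.π.naturality WalkingParallelPairHom.left
  have h₂ := c.π.naturality WalkingParallelPairHom.right
  simp only [Functor.const_obj_obj, Functor.const_obj_map, parallelPair_obj_zero,
    parallelPair_obj_one, parallelPair_map_left, parallelPair_map_right, Category.id_comp] at h₁ h₂
  rw [← h₁, ← h₂]

/-- Zigzag collapse: two raw elements equal in the coend can be pulled back to a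
common refinement where they literally agree. -/
lemma collapse {W : Kᵒᵖ ⥤ Type v} {a b : Raw G W} (h : Relation.EqvGen (Rel G W) a b) :
    ∃ (n : G.Elements) (f : n ⟶ a.1) (g : n ⟶ b.1),
      W.map f.val.op a.2 = W.map g.val.op b.2 := by
  induction h with
  | rel a b hab =>
    obtain ⟨f, hf⟩ := hab
    exact ⟨a.1, 𝟙 a.1, f, by rw [hf, pull_id]⟩
  | refl a => exact ⟨a.1, 𝟙 a.1, 𝟙 a.1, rfl⟩
  | symm a b _ ih =>
    obtain ⟨n, f, g, hfg⟩ := ih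
    exact ⟨n, g, f, hfg.symm⟩
  | trans a b c _ _ ih₁ ih₂ =>
    obtain ⟨n₁, f₁, g₁, h₁⟩ := ih₁
    obtain ⟨n₂, f₂, g₂, h₂⟩ := ih₂
    obtain ⟨n, p₁, p₂, -⟩ := exists_pair G n₁ n₂
    obtain ⟨m, q, hq⟩ := exists_equalize G (p₁ ≫ g₁) (p₂ ≫ f₂)
    refine ⟨m, q ≫ p₁ ≫ f₁, q ≫ p₂ ≫ g₂, ?_⟩
    have h₃ : (q ≫ p₁) ≫ g₁ = (q ≫ p₂) ≫ f₂ := by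
      rw [Category.assoc, Category.assoc, hq]
    calc W.map (q ≫ p₁ ≫ f₁).val.op a.2
        = W.map (q ≫ p₁).val.op (W.map f₁.val.op a.2) := by
          rw [← pull_comp, Category.assoc]
      _ = W.map (q ≫ p₁).val.op (W.map g₁.val.op b.2) := by rw [h₁]
      _ = W.map ((q ≫ p₁) ≫ g₁).val.op b.2 := (pull_comp G _ _ _).symm
      _ = W.map ((q ≫ p₂) ≫ f₂).val.op b.2 := by rw [h₃]
      _ = W.map (q ≫ p₂).val.op (W.map f₂.val.op b.2) := pull_comp G _ _ _
      _ = W.map (q ≫ p₂).val.op (W.map g₂.val.op c.2) := by rw [h₂]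
      _ = W.map (q ≫ p₂ ≫ g₂).val.op c.2 := by rw [← pull_comp, Category.assoc]

end Filtered

lemma mkT0_exact {X : SmallPresheaf K} {a b : Raw G X.obj} (h : mkT0 G X a = mkT0 G X b) :
    Relation.EqvGen (Rel G X.obj) a b :=
  Quot.eq.mp ((pack G X).injective h)

section Continuity

variable [HasLimitsOfSize.{v, v} K] [PreservesLimitsOfSize.{v, v} G]

/-- Cones over multispans in the category of elements. -/
lemma exists_multispan_cone {L R : Type v} (left : L → G.Elements) (right : R → G.Elements)
    (fstFrom sndFrom : L → R) (fst : ∀ a, left a ⟶ right (fstFrom a))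
    (snd : ∀ a, left a ⟶ right (sndFrom a)) :
    ∃ (n : G.Elements) (wl : ∀ a, n ⟶ left a) (wr : ∀ r, n ⟶ right r),
      (∀ a, wl a ≫ fst a = wr (fstFrom a)) ∧ (∀ a, wl a ≫ snd a = wr (sndFrom a)) := by
  let I : MultispanIndex ⟨L, R, fstFrom, sndFrom⟩ (G.Elements) :=
    ⟨left, right, fst, snd⟩
  obtain ⟨c⟩ := exists_cone_elements G I.multispan
  refine ⟨c.pt, fun a => c.π.app (WalkingMultispan.left a),
    fun r => c.π.app (WalkingMultispan.right r), fun a => ?_, fun a => ?_⟩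
  · exact c.w (WalkingMultispan.Hom.fst a)
  · exact c.w (WalkingMultispan.Hom.snd a)

variable {J : Type v} [Category.{v} J] (D : J ⥤ SmallPresheaf K) (cD : Cone D)

/-- Any limit cone of small presheaves is a pointwise limit: existence. -/
lemma pl_exists (hcD : IsLimit cD) (k : K) (x : ∀ j, (D.obj j).obj.obj (op k))
    (hx : ∀ {j j'} (φ : j ⟶ j'), ((D.map φ).hom.app (op k)) (x j) = x j') :
    ∃ xx : cD.pt.obj.obj (op k), ∀ j, ((cD.π.app j).hom.app (op k)) xx = x j := by
  let cy : Cone D :=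
    { pt := (smallYoneda K).obj k
      π :=
        { app := fun j => ObjectProperty.homMk (yonedaEquiv.symm (x j) : yoneda.obj k ⟶ (D.obj j).obj)
          naturality := fun j j' φ => by
            dsimp only [Functor.const_obj_obj, Functor.const_obj_map]
            rw [Category.id_comp]
            apply ObjectProperty.hom_ext
            show (yonedaEquiv.symm (x j') : yoneda.obj k ⟶ (D.obj j').obj) =
              yonedaEquiv.symm (x j) ≫ (D.map φ).hom
            rw [yonedaEquiv_symm_naturality_right]
            exact congrArg _ (hx φ).symm } }
  let u := hcD.lift cy
  refine ⟨u.hom.app (op k) (𝟙 k), fun j => ?_⟩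
  have hfac := types_congr_hom (NatTrans.congr_app (congrArg (fun t => t.hom) (hcD.fac cy j)) (op k)) (𝟙 k)
  have : (cD.π.app j).hom.app (op k) (u.hom.app (op k) (𝟙 k)) =
      (yonedaEquiv.symm (x j)).app (op k) (𝟙 k) := hfac
  erw [this, yonedaEquiv_symm_app_apply]
  exact types_congr_hom ((D.obj j).obj.map_id _) (x j)

/-- Any limit cone of small presheaves is a pointwise limit: uniqueness. -/
lemma pl_unique (hcD : IsLimit cD) (k : K) (xx xx' : cD.pt.obj.obj (op k))
    (h : ∀ j, (cD.π.app j).hom.app (op k) xx = (cD.π.app j).hom.app (op k) xx') : xx = xx' := by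
  let u : (smallYoneda K).obj k ⟶ cD.pt := ObjectProperty.homMk (yonedaEquiv.symm xx : yoneda.obj k ⟶ cD.pt.obj)
  let u' : (smallYoneda K).obj k ⟶ cD.pt := ObjectProperty.homMk (yonedaEquiv.symm xx' : yoneda.obj k ⟶ cD.pt.obj)
  have h1 : ∀ j, u ≫ cD.π.app j = u' ≫ cD.π.app j := by
    intro j
    apply ObjectProperty.hom_ext
    show (yonedaEquiv.symm xx ≫ (cD.π.app j).hom : yoneda.obj k ⟶ (D.obj j).obj) =
      yonedaEquiv.symm xx' ≫ (cD.π.app j).hom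
    rw [yonedaEquiv_symm_naturality_right, yonedaEquiv_symm_naturality_right]
    exact congrArg _ (h j)
  let cy : Cone D :=
    { pt := (smallYoneda K).obj k
      π :=
        { app := fun j => u ≫ cD.π.app j
          naturality := fun j j' φ => by
            dsimp only [Functor.const_obj_obj, Functor.const_obj_map]
            rw [Category.id_comp, Category.assoc, cD.w φ] } }
  have hu : u = hcD.lift cy := hcD.uniq cy u (fun j => rfl)
  have hu' : u' = hcD.lift cy := hcD.uniq cy u' (fun j => (h1 j).symm)
  have : (yonedaEquiv.symm xx : yoneda.obj k ⟶ cD.pt.obj) = yonedaEquiv.symm xx' :=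
    congrArg (fun t => t.hom) (hu.trans hu'.symm)
  exact yonedaEquiv.symm.injective this

/-- Injectivity half of continuity. -/
lemma T0_inj (hcD : IsLimit cD) (z z' : (T0 G).obj cD.pt)
    (h : ∀ j, (T0 G).map (cD.π.app j) z = (T0 G).map (cD.π.app j) z') : z = z' := by
  obtain ⟨b, hb⟩ := Quot.exists_rep ((pack G cD.pt).symm z)
  have hzb : z = mkT0 G cD.pt b := by erw [mkT0, hb, Equiv.apply_symm_apply]
  obtain ⟨b', hb'⟩ := Quot.exists_rep ((pack G cD.pt).symm z')
  have hzb' : z' = mkT0 G cD.pt b' := by erw [mkT0, hb', Equiv.apply_symm_apply]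
  obtain ⟨n0, p, p', -⟩ := exists_pair G b.1 b'.1
  set w : cD.pt.obj.obj (op n0.1) := cD.pt.obj.map p.val.op b.2 with hw
  set w' : cD.pt.obj.obj (op n0.1) := cD.pt.obj.map p'.val.op b'.2 with hw'
  have hz1 : z = mkT0 G cD.pt ⟨n0, w⟩ := by
    rw [hzb]
    exact (mkT0_eq G _ _ _ (Quot.sound ⟨p, rfl⟩)).symm
  have hz1' : z' = mkT0 G cD.pt ⟨n0, w'⟩ := by
    rw [hzb']
    exact (mkT0_eq G _ _ _ (Quot.sound ⟨p', rfl⟩)).symm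
  have key : ∀ j : J, ∃ (m : G.Elements) (r : m ⟶ n0) (r' : m ⟶ n0),
      (D.obj j).obj.map r.val.op ((cD.π.app j).hom.app (op n0.1) w) =
      (D.obj j).obj.map r'.val.op ((cD.π.app j).hom.app (op n0.1) w') := by
    intro j
    have e1 := T0_map_mk G (cD.π.app j) (⟨n0, w⟩ : Raw G cD.pt.obj)
    have e2 := T0_map_mk G (cD.π.app j) (⟨n0, w'⟩ : Raw G cD.pt.obj)
    have h3 : (T0 G).map (cD.π.app j) (mkT0 G cD.pt ⟨n0, w⟩) =
        (T0 G).map (cD.π.app j) (mkT0 G cD.pt ⟨n0, w'⟩) := by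
      rw [← hz1, ← hz1']
      exact h j
    have hmk : mkT0 G (D.obj j) ⟨n0, (cD.π.app j).hom.app (op n0.1) w⟩ =
        mkT0 G (D.obj j) ⟨n0, (cD.π.app j).hom.app (op n0.1) w'⟩ :=
      e1.symm.trans (h3.trans e2)
    obtain ⟨m, r, r', hm⟩ := collapse G (mkT0_exact G hmk)
    exact ⟨m, r, r', hm⟩
  choose m r r' hm using key
  obtain ⟨N, wl, wr, h1, h2⟩ := exists_multispan_cone G m (fun _ : PUnit => n0)
    (fun _ => PUnit.unit) (fun _ => PUnit.unit) r r'
  have heq : cD.pt.obj.map (wr PUnit.unit).val.op w = cD.pt.obj.map (wr PUnit.unit).val.op w' := by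
    refine pl_unique D cD hcD N.1 _ _ (fun j => ?_)
    have hn : ∀ (y : cD.pt.obj.obj (op n0.1)),
        (cD.π.app j).hom.app (op N.1) (cD.pt.obj.map (wr PUnit.unit).val.op y) =
        (D.obj j).obj.map (wr PUnit.unit).val.op ((cD.π.app j).hom.app (op n0.1) y) := fun y =>
      types_congr_hom ((cD.π.app j).hom.naturality (wr PUnit.unit).val.op) y
    calc (cD.π.app j).hom.app (op N.1) (cD.pt.obj.map (wr PUnit.unit).val.op w)
        = (D.obj j).obj.map (wr PUnit.unit).val.op ((cD.π.app j).hom.app (op n0.1) w) := hn w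
      _ = (D.obj j).obj.map (wl j ≫ r j).val.op ((cD.π.app j).hom.app (op n0.1) w) := by
          rw [h1 j]
      _ = (D.obj j).obj.map (wl j).val.op
            ((D.obj j).obj.map (r j).val.op ((cD.π.app j).hom.app (op n0.1) w)) :=
          pull_comp G _ _ _
      _ = (D.obj j).obj.map (wl j).val.op
            ((D.obj j).obj.map (r' j).val.op ((cD.π.app j).hom.app (op n0.1) w')) :=
          congrArg _ (hm j)
      _ = (D.obj j).obj.map (wl j ≫ r' j).val.op ((cD.π.app j).hom.app (op n0.1) w') :=
          (pull_comp G _ _ _).symm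
      _ = (D.obj j).obj.map (wr PUnit.unit).val.op ((cD.π.app j).hom.app (op n0.1) w') := by
          rw [h2 j]
      _ = (cD.π.app j).hom.app (op N.1) (cD.pt.obj.map (wr PUnit.unit).val.op w') := (hn w').symm
  have hzN : z = mkT0 G cD.pt ⟨N, cD.pt.obj.map (wr PUnit.unit).val.op w⟩ := by
    rw [hz1]
    exact (mkT0_eq G _ _ _ (Quot.sound ⟨wr PUnit.unit, rfl⟩)).symm
  have hzN' : z' = mkT0 G cD.pt ⟨N, cD.pt.obj.map (wr PUnit.unit).val.op w'⟩ := by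
    rw [hz1']
    exact (mkT0_eq G _ _ _ (Quot.sound ⟨wr PUnit.unit, rfl⟩)).symm
  rw [hzN, hzN', heq]

/-- T0 preserves all small limits. -/
theorem T0_preserves : PreservesLimitsOfSize.{v, v} (T0 G) := by
  constructor
  intro J _
  constructor
  intro D
  constructor
  intro cD hcD
  refine (Types.isLimit_iff ((T0 G).mapCone cD)).mpr ?_
  intro s hs
  have hrep : ∀ j, ∃ a : Raw G (D.obj j).obj, mkT0 G (D.obj j) a = s j := by
    intro j
    obtain ⟨a, ha⟩ := Quot.exists_rep ((pack G (D.obj j)).symm (s j))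
    exact ⟨a, by erw [mkT0, ha, Equiv.apply_symm_apply]⟩
  choose a ha using hrep
  have key : ∀ q : Σ j j' : J, j ⟶ j', ∃ (mq : G.Elements)
      (uu : mq ⟶ (a q.1).1) (vv : mq ⟶ (a q.2.1).1),
      (D.obj q.2.1).obj.map uu.val.op ((D.map q.2.2).hom.app _ ((a q.1).2)) =
      (D.obj q.2.1).obj.map vv.val.op ((a q.2.1).2) := by
    rintro ⟨j, j', φ⟩
    have hsφ : (T0 G).map (D.map φ) (mkT0 G (D.obj j) (a j)) = mkT0 G (D.obj j') (a j') := by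
      rw [ha j, ha j']
      exact hs φ
    rw [T0_map_mk] at hsφ
    obtain ⟨mq, uu, vv, hm⟩ := collapse G (mkT0_exact G hsφ)
    exact ⟨mq, uu, vv, hm⟩
  choose mq uu vv hmq using key
  obtain ⟨n, wl, wr, h1, h2⟩ := exists_multispan_cone G mq (fun j => (a j).1)
    (fun q => q.1) (fun q => q.2.1) uu vv
  have hycompat : ∀ {j j'} (φ : j ⟶ j'),
      ((D.map φ).hom.app (op n.1)) ((D.obj j).obj.map (wr j).val.op ((a j).2)) =
      (D.obj j').obj.map (wr j').val.op ((a j').2) := by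
    intro j j' φ
    set q : Σ j j' : J, j ⟶ j' := ⟨j, j', φ⟩ with hq
    have hnat : ((D.map φ).hom.app (op n.1)) ((D.obj j).obj.map (wr j).val.op ((a j).2)) =
        (D.obj j').obj.map (wr j).val.op (((D.map φ).hom.app _) ((a j).2)) :=
      types_congr_hom ((D.map φ).hom.naturality (wr j).val.op) ((a j).2)
    calc ((D.map φ).hom.app (op n.1)) ((D.obj j).obj.map (wr j).val.op ((a j).2))
        = (D.obj j').obj.map (wr j).val.op (((D.map φ).hom.app _) ((a j).2)) := hnat
      _ = (D.obj j').obj.map (wl q ≫ uu q).val.op (((D.map φ).hom.app _) ((a j).2)) := by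
          rw [h1 q]
      _ = (D.obj j').obj.map (wl q).val.op
            ((D.obj j').obj.map (uu q).val.op (((D.map φ).hom.app _) ((a j).2))) :=
          pull_comp G _ _ _
      _ = (D.obj j').obj.map (wl q).val.op
            ((D.obj j').obj.map (vv q).val.op ((a j').2)) := congrArg _ (hmq q)
      _ = (D.obj j').obj.map (wl q ≫ vv q).val.op ((a j').2) := (pull_comp G _ _ _).symm
      _ = (D.obj j').obj.map (wr j').val.op ((a j').2) := by rw [h2 q]
  obtain ⟨xx, hxx⟩ := pl_exists D cD hcD n.1
    (fun j => (D.obj j).obj.map (wr j).val.op ((a j).2)) hycompat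
  have himg : ∀ j, (T0 G).map (cD.π.app j) (mkT0 G cD.pt ⟨n, xx⟩) = s j := by
    intro j
    have e1 := T0_map_mk G (cD.π.app j) (⟨n, xx⟩ : Raw G cD.pt.obj)
    refine e1.trans ?_
    rw [← ha j]
    have h4 : Quot.mk (Rel G (D.obj j).obj)
        (⟨n, (D.obj j).obj.map (wr j).val.op ((a j).2)⟩ : Raw G (D.obj j).obj) =
        Quot.mk (Rel G (D.obj j).obj) (a j) := Quot.sound ⟨wr j, rfl⟩
    refine mkT0_eq G _ _ _ (Eq.trans (congrArg _ ?_) h4)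
    show (⟨n, (cD.π.app j).hom.app (op n.1) xx⟩ : Raw G (D.obj j).obj) =
      ⟨n, (D.obj j).obj.map (wr j).val.op ((a j).2)⟩
    rw [hxx j]
  refine ⟨mkT0 G cD.pt ⟨n, xx⟩, himg, fun z hz => ?_⟩
  refine T0_inj G D cD hcD z _ (fun j => ?_)
  exact (hz j).trans (himg j).symm

end Continuity

end St14

/-- If `K` is complete and `G : K ⥤ Set` is continuous, then the left Kan
extension of `G` along the Yoneda embedding `Y : K ⥤ PK` is continuous. -/
theorem statement14 {K : Type u} [Category.{v} K] [HasLimitsOfSize.{v, v} K]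
    (G : K ⥤ Type v) [PreservesLimitsOfSize.{v, v} G]
    (T : SmallPresheaf K ⥤ Type v) (α : G ⟶ smallYoneda K ⋙ T)
    (hT : T.IsLeftKanExtension α) :
    PreservesLimitsOfSize.{v, v} T := by
  haveI := hT
  haveI := St14.T0_isLKE G
  have e : T ≅ St14.T0 G := Functor.leftKanExtensionUnique T α (St14.T0 G) (St14.α0 G)
  haveI := St14.T0_preserves G
  exact preservesLimits_of_natIso e.symm
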